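/- Let S be a ring and k a commutative ring such that the category of OVI(S)-modules over k is locally noetherian. If there is a surjective ring homomorphism S → R, then the category of OVI(R)-modules over k is locally noetherian. -/

import Mathlib

open CategoryTheory

universe u

/-- The (skeletal model of the) category `OI` of finite totally ordered sets and
order-preserving injections: the object `n` represents `[n] = {1, …, n}`, and a
morphism `n ⟶ m` is an order-preserving injection `Fin n ↪o Fin m`. -/
def OI : Type := ℕ

namespace OI

/-- Build an object of `OI` from a natural number. -/
def mk (n : ℕ) : OI := n

/-- The underlying natural number of an object of `OI`. -/
def len (n : OI) : ℕ := n

instance : Category OI where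
  Hom n m := Fin n.len ↪o Fin m.len
  id _ := RelEmbedding.refl _
  comp f g := f.trans g
  id_comp _ := rfl
  comp_id _ := rfl
  assoc _ _ _ := rfl

/-- The order embedding underlying a morphism of `OI`. -/
def emb {n m : OI} (f : n ⟶ m) : Fin n.len ↪o Fin m.len := f

@[ext]
theorem hom_ext {n m : OI} (f g : n ⟶ m) (h : ∀ i, emb f i = emb g i) : f = g :=
  RelEmbedding.ext h

end OI

/-- A module over a category `C` (a functor `C ⥤ Mod_k`) is finitely generated if there
are finitely many elements `mᵢ ∈ M xᵢ` whose images under all morphisms span every `M y`;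
equivalently, `M` is a quotient of a finite direct sum of principal projectives. -/
def CatModule.FG {C : Type*} [Category C] {k : Type u} [CommRing k]
    (M : C ⥤ ModuleCat.{u} k) : Prop :=
  ∃ (r : ℕ) (x : Fin r → C) (m : ∀ i, M.obj (x i)),
    ∀ y : C, Submodule.span k
      {v : M.obj y | ∃ (i : Fin r) (f : x i ⟶ y), M.map f (m i) = v} = ⊤

section OVIDef

variable {R : Type u} [Ring R]

theorem linearMap_apply_eq_sum {n m : ℕ} (ψ : (Fin n → R) →ₗ[R] (Fin m → R))
    (w : Fin n → R) (s : Fin m) :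
    ψ w s = ∑ r : Fin n, w r * ψ (Pi.single r 1) s := by
  have hw : w = ∑ r : Fin n, (w r) • (Pi.single r (1 : R) : Fin n → R) := by
    funext x
    simp [Finset.sum_apply, Pi.single_apply, mul_ite]
  conv_lhs => rw [hw]
  rw [map_sum]
  simp [Finset.sum_apply, smul_eq_mul]

/-- A linear map between ordered free `R`-modules is a morphism of `OVI(R)` if there is
an order-preserving injection `f₀` of the index sets such that the `i`-th basis vector is
sent to the `f₀(i)`-th basis vector plus lower order terms. -/
def IsOVIHom {n m : ℕ} (φ : (Fin n → R) →ₗ[R] (Fin m → R)) : Prop :=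
  ∃ f : Fin n ↪o Fin m, ∀ i : Fin n,
    φ (Pi.single i 1) (f i) = 1 ∧ ∀ r : Fin m, f i < r → φ (Pi.single i 1) r = 0

theorem isOVIHom_id (n : ℕ) : IsOVIHom (LinearMap.id : (Fin n → R) →ₗ[R] (Fin n → R)) := by
  refine ⟨RelEmbedding.refl _, fun i => ⟨Pi.single_eq_same i 1, fun r hr => ?_⟩⟩
  exact Pi.single_eq_of_ne hr.ne' 1

theorem isOVIHom_comp {n m p : ℕ} {φ : (Fin n → R) →ₗ[R] (Fin m → R)}
    {ψ : (Fin m → R) →ₗ[R] (Fin p → R)} (hφ : IsOVIHom φ) (hψ : IsOVIHom ψ) :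
    IsOVIHom (ψ ∘ₗ φ) := by
  obtain ⟨f, hf⟩ := hφ
  obtain ⟨g, hg⟩ := hψ
  refine ⟨f.trans g, fun i => ?_⟩
  have key : ∀ s : Fin p, (ψ ∘ₗ φ) (Pi.single i 1) s
      = ∑ r : Fin m, φ (Pi.single i 1) r * ψ (Pi.single r 1) s := fun s =>
    linearMap_apply_eq_sum ψ (φ (Pi.single i 1)) s
  constructor
  · have h1 : ∀ r : Fin m, r ∈ Finset.univ → r ≠ f i →
        φ (Pi.single i 1) r * ψ (Pi.single r 1) (g (f i)) = 0 := by
      intro r _ hr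
      rcases lt_or_gt_of_ne hr with h | h
      · have h2 : ψ (Pi.single r 1) (g (f i)) = 0 := (hg r).2 _ (g.strictMono h)
        rw [h2, mul_zero]
      · have h2 : φ (Pi.single i 1) r = 0 := (hf i).2 r h
        rw [h2, zero_mul]
    have h3 : ∑ r : Fin m, φ (Pi.single i 1) r * ψ (Pi.single r 1) (g (f i)) = 1 := by
      rw [Finset.sum_eq_single (f i) (fun r hmem hr => h1 r hmem hr) (by simp),
        (hf i).1, (hg (f i)).1, one_mul]
    exact (key (g (f i))).trans h3
  · intro s hs
    have h0 : ∑ r : Fin m, φ (Pi.single i 1) r * ψ (Pi.single r 1) s = 0 := by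
      apply Finset.sum_eq_zero
      intro r _
      rcases le_or_gt r (f i) with h | h
      · have h2 : ψ (Pi.single r 1) s = 0 := (hg r).2 s (lt_of_le_of_lt (g.monotone h) hs)
        rw [h2, mul_zero]
      · have h2 : φ (Pi.single i 1) r = 0 := (hf i).2 r h
        rw [h2, zero_mul]
    exact (key s).trans h0

end OVIDef

/-- The (skeletal model of the) category `OVI(R)` of finite rank free left `R`-modules
with a totally ordered basis: the object `n` represents `R^n` with its standard ordered
basis, and morphisms are the `R`-linear maps that send each basis vector to a basis
vector plus lower order terms (for an order-preserving injection of the index sets). -/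
def OVI (R : Type u) [Ring R] : Type := ℕ

namespace OVI

variable {R : Type u} [Ring R]

/-- Build an object of `OVI R` from a natural number. -/
def mk (R : Type u) [Ring R] (n : ℕ) : OVI R := n

/-- The rank of an object of `OVI R`. -/
def len (n : OVI R) : ℕ := n

instance : Category (OVI R) where
  Hom n m := { φ : (Fin n.len → R) →ₗ[R] (Fin m.len → R) // IsOVIHom φ }
  id n := ⟨LinearMap.id, isOVIHom_id n.len⟩
  comp φ ψ := ⟨ψ.1 ∘ₗ φ.1, isOVIHom_comp φ.2 ψ.2⟩
  id_comp _ := Subtype.ext (LinearMap.comp_id _)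
  comp_id _ := Subtype.ext (LinearMap.id_comp _)
  assoc _ _ _ := Subtype.ext (LinearMap.comp_assoc _ _ _).symm

/-- The linear map underlying a morphism of `OVI R`. -/
def toLinear {n m : OVI R} (φ : n ⟶ m) : (Fin n.len → R) →ₗ[R] (Fin m.len → R) :=
  (φ : { φ : (Fin n.len → R) →ₗ[R] (Fin m.len → R) // IsOVIHom φ }).1

end OVI

section Transfer

variable {S R : Type u} [Ring S] [Ring R]

/-- Linear map from a matrix, over a possibly noncommutative ring. -/
def ofMat {T : Type u} [Ring T] {n m : ℕ} (a : Fin n → Fin m → T) :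
    (Fin n → T) →ₗ[T] (Fin m → T) where
  toFun w := fun s => ∑ r, w r * a r s
  map_add' w₁ w₂ := by funext s; simp [add_mul, Finset.sum_add_distrib]
  map_smul' c w := by funext s; simp [Finset.mul_sum, mul_assoc]

theorem ofMat_single {T : Type u} [Ring T] {n m : ℕ} (a : Fin n → Fin m → T)
    (i : Fin n) (s : Fin m) : ofMat a (Pi.single i 1) s = a i s := by
  simp only [ofMat, LinearMap.coe_mk, AddHom.coe_mk]
  rw [Finset.sum_eq_single i]
  · simp
  · intro r _ hr; simp [Pi.single_eq_of_ne hr]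
  · simp

theorem linearMap_ext_single {T : Type u} [Ring T] {n m : ℕ}
    {ψ₁ ψ₂ : (Fin n → T) →ₗ[T] (Fin m → T)}
    (h : ∀ r s, ψ₁ (Pi.single r 1) s = ψ₂ (Pi.single r 1) s) : ψ₁ = ψ₂ := by
  apply LinearMap.ext; intro w; funext s
  rw [linearMap_apply_eq_sum, linearMap_apply_eq_sum]
  exact Finset.sum_congr rfl fun r _ => by rw [h]

variable (f : S →+* R)

/-- Apply `f` to the matrix of a linear map. -/
def mapLinear {n m : ℕ} (φ : (Fin n → S) →ₗ[S] (Fin m → S)) :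
    (Fin n → R) →ₗ[R] (Fin m → R) :=
  ofMat (fun r s => f (φ (Pi.single r 1) s))

theorem mapLinear_single {n m : ℕ} (φ : (Fin n → S) →ₗ[S] (Fin m → S))
    (i : Fin n) (s : Fin m) :
    mapLinear f φ (Pi.single i 1) s = f (φ (Pi.single i 1) s) :=
  ofMat_single _ i s

theorem isOVIHom_mapLinear {n m : ℕ} {φ : (Fin n → S) →ₗ[S] (Fin m → S)}
    (h : IsOVIHom φ) : IsOVIHom (mapLinear f φ) := by
  obtain ⟨e, he⟩ := h
  refine ⟨e, fun i => ⟨?_, fun r hr => ?_⟩⟩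
  · rw [mapLinear_single, (he i).1, map_one]
  · rw [mapLinear_single, (he i).2 r hr, map_zero]

/-- The functor `OVI S ⥤ OVI R` induced by a ring hom `f : S →+* R`. -/
def OVIMap : OVI S ⥤ OVI R where
  obj n := OVI.mk R n.len
  map φ := ⟨mapLinear f φ.1, isOVIHom_mapLinear f φ.2⟩
  map_id n := Subtype.ext (linearMap_ext_single (fun i s => by
    erw [mapLinear_single]
    show f ((Pi.single i 1 : Fin n.len → S) s) = (Pi.single i 1 : Fin n.len → R) s
    rcases eq_or_ne s i with h | h
    · subst h; erw [Pi.single_eq_same, Pi.single_eq_same, map_one]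
    · erw [Pi.single_eq_of_ne h, Pi.single_eq_of_ne h, map_zero]))
  map_comp {n m p} φ ψ := Subtype.ext (linearMap_ext_single (fun i s => by
    show mapLinear f (ψ.1 ∘ₗ φ.1) (Pi.single i 1) s
        = (mapLinear f ψ.1 ∘ₗ mapLinear f φ.1) (Pi.single i 1) s
    erw [mapLinear_single]
    have h1 : (ψ.1 ∘ₗ φ.1) (Pi.single i 1) s
        = ∑ r : Fin m.len, φ.1 (Pi.single i 1) r * ψ.1 (Pi.single r 1) s :=
      linearMap_apply_eq_sum ψ.1 (φ.1 (Pi.single i 1)) s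
    have h2 : (mapLinear f ψ.1 ∘ₗ mapLinear f φ.1) (Pi.single i 1) s
        = ∑ r : Fin m.len, mapLinear f φ.1 (Pi.single i 1) r
            * mapLinear f ψ.1 (Pi.single r 1) s :=
      linearMap_apply_eq_sum (mapLinear f ψ.1) (mapLinear f φ.1 (Pi.single i 1)) s
    rw [h1, h2, map_sum]
    exact Finset.sum_congr rfl fun r _ => by
      erw [map_mul, mapLinear_single, mapLinear_single]))

theorem OVIMap_full (hf : Function.Surjective f) {n m : OVI S}
    (g : (OVIMap f).obj n ⟶ (OVIMap f).obj m) :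
    ∃ φ : n ⟶ m, (OVIMap f).map φ = g := by
  classical
  obtain ⟨e, he⟩ := g.2
  set a : Fin n.len → Fin m.len → S := fun i s =>
    if s = e i then 1 else if e i < s then 0
    else Classical.choose (hf (g.1 (Pi.single i 1) s)) with ha
  have hfa : ∀ i s, f (a i s) = g.1 (Pi.single i 1) s := by
    intro i s
    rcases eq_or_ne s (e i) with h | h
    · subst h; simp only [ha]; erw [if_pos rfl, map_one]; exact ((he i).1).symm
    · rcases lt_or_ge (e i) s with h2 | h2
      · simp only [ha]; erw [if_neg h, if_pos h2, map_zero]; exact ((he i).2 s h2).symm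
      · simp only [ha]; erw [if_neg h, if_neg (not_lt.2 h2)]
        exact Classical.choose_spec (hf (g.1 (Pi.single i 1) s))
  have hovi : IsOVIHom (ofMat a) := by
    refine ⟨e, fun i => ⟨?_, fun r hr => ?_⟩⟩
    · rw [ofMat_single, ha]; exact if_pos rfl
    · rw [ofMat_single]; simp only [ha]
      split_ifs with h1 h2
      · exact absurd h1 hr.ne'
      · rfl
      · exact absurd hr h2
  refine ⟨⟨ofMat a, hovi⟩, Subtype.ext (linearMap_ext_single fun i s => ?_)⟩
  show mapLinear f (ofMat a) (Pi.single i 1) s = g.1 (Pi.single i 1) s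
  erw [mapLinear_single, ofMat_single, hfa]

end Transfer

/-- The category of `OVI(R)`-modules over `k` is locally noetherian: every submodule of
a finitely generated `OVI(R)`-module is finitely generated. -/
def OVIModulesLocallyNoetherian (R : Type u) [Ring R] (k : Type u) [CommRing k] : Prop :=
  ∀ (M N : OVI R ⥤ ModuleCat.{u} k) (ι : N ⟶ M), CategoryTheory.Mono ι →
    CatModule.FG M → CatModule.FG N

/-- Let `S` be a ring and `k` a commutative ring such that the category of
`OVI(S)`-modules over `k` is locally noetherian.  If `S` surjects onto a ring `R`, then
the category of `OVI(R)`-modules over `k` is locally noetherian. -/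
theorem ovi_locally_noetherian_of_surjective (S R : Type u) [Ring S] [Ring R]
    (k : Type u) [CommRing k] (hS : OVIModulesLocallyNoetherian S k)
    (f : S →+* R) (hf : Function.Surjective f) :
    OVIModulesLocallyNoetherian R k := by
  intro M N ι hmono hM
  have hmono' : CategoryTheory.Mono (CategoryTheory.Functor.whiskerLeft (OVIMap f) ι) := by
    rw [NatTrans.mono_iff_mono_app] at hmono ⊢
    intro x
    exact hmono ((OVIMap f).obj x)
  have hM' : CatModule.FG (OVIMap f ⋙ M) := by
    obtain ⟨r, x, m, hspan⟩ := hM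
    refine ⟨r, fun i => OVI.mk S (x i).len, fun i => m i, fun y => ?_⟩
    rw [eq_top_iff, ← hspan ((OVIMap f).obj y)]
    apply Submodule.span_mono
    rintro v ⟨i, g, hg⟩
    obtain ⟨φ, hφ⟩ := OVIMap_full f hf (n := OVI.mk S (x i).len) (m := y) g
    exact ⟨i, φ, by rw [Functor.comp_map, hφ]; exact hg⟩
  obtain ⟨r, x, m, hspan⟩ := hS (OVIMap f ⋙ M) (OVIMap f ⋙ N)
    (CategoryTheory.Functor.whiskerLeft (OVIMap f) ι) hmono' hM'
  refine ⟨r, fun i => (OVIMap f).obj (x i), fun i => m i, fun y => ?_⟩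
  erw [eq_top_iff, ← hspan (OVI.mk S y.len)]
  apply Submodule.span_mono
  rintro v ⟨i, φ, hφ⟩
  exact ⟨i, (OVIMap f).map φ, hφ⟩
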